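/- Every special multiserial algebra A = KQ/I is a quotient of a symmetric special multiserial algebra: the algebra A* = KQ*/I* defined by the defining pair (𝒮, μ) associated to A admits a surjective algebra homomorphism A* → A. -/

import Mathlib

/-!  A model of the path algebra `KQ` of a finite quiver `Q` (vertex set `V`,
arrow set `A`, source and target maps `s t : A → V`), as the quotient of the
free algebra on `V ⊕ A` by the usual path-algebra relations.  -/

open FreeAlgebra

inductive PathRel (K V A : Type) [Field K] [Fintype V] [DecidableEq V] (s t : A → V) :
    FreeAlgebra K (V ⊕ A) → FreeAlgebra K (V ⊕ A) → Prop
  | vtxMul : ∀ v w : V,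
      PathRel K V A s t (ι K (Sum.inl v) * ι K (Sum.inl w))
        (if v = w then ι K (Sum.inl v) else 0)
  | unit : PathRel K V A s t (∑ v : V, ι K (Sum.inl v)) 1
  | src : ∀ a : A,
      PathRel K V A s t (ι K (Sum.inl (s a)) * ι K (Sum.inr a)) (ι K (Sum.inr a))
  | tgt : ∀ a : A,
      PathRel K V A s t (ι K (Sum.inr a) * ι K (Sum.inl (t a))) (ι K (Sum.inr a))

/-- The path algebra `KQ`. -/
abbrev PathAlg (K V A : Type) [Field K] [Fintype V] [DecidableEq V] (s t : A → V) : Type :=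
  RingQuot (PathRel K V A s t)

section

variable (K V A : Type) [Field K] [Fintype V] [DecidableEq V] (s t : A → V)

/-- The element of `KQ` corresponding to an arrow. -/
noncomputable def arrow (a : A) : PathAlg K V A s t :=
  RingQuot.mkAlgHom K (PathRel K V A s t) (ι K (Sum.inr a))

/-- The idempotent of `KQ` corresponding to a vertex (trivial path). -/
noncomputable def vtx (v : V) : PathAlg K V A s t :=
  RingQuot.mkAlgHom K (PathRel K V A s t) (ι K (Sum.inl v))

/-- The element of `KQ` given by a path, recorded as its list of arrows. -/
noncomputable def pathElem (l : List A) : PathAlg K V A s t :=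
  (l.map (arrow K V A s t)).prod

/-- The ideal `J²`, where `J` is the arrow ideal: it is generated by the
products of two arrows (equivalently, by the paths of length 2). -/
def JSqIdeal : TwoSidedIdeal (PathAlg K V A s t) :=
  TwoSidedIdeal.span {x | ∃ a b : A, x = arrow K V A s t a * arrow K V A s t b}

/-- An ideal `I` of `KQ` is admissible if `J^N ⊆ I ⊆ J²` for some `N ≥ 2`;
`J^N ⊆ I` amounts to all paths of length `N` lying in `I`. -/
def Admissible (I : TwoSidedIdeal (PathAlg K V A s t)) : Prop :=
  ∃ N : ℕ, 2 ≤ N ∧ (∀ l : List A, l.length = N → pathElem K V A s t l ∈ I) ∧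
    I ≤ JSqIdeal K V A s t

/-- Condition (M): for every arrow `a` there is at most one arrow `b` with
`ab ∉ I` and at most one arrow `c` with `ca ∉ I`. -/
def ConditionM (I : TwoSidedIdeal (PathAlg K V A s t)) : Prop :=
  ∀ a : A,
    (∀ b b' : A, arrow K V A s t a * arrow K V A s t b ∉ I →
      arrow K V A s t a * arrow K V A s t b' ∉ I → b = b') ∧
    (∀ c c' : A, arrow K V A s t c * arrow K V A s t a ∉ I →
      arrow K V A s t c' * arrow K V A s t a ∉ I → c = c')

/-- `σ : Q₁ → Q₁ ∪ {⋄}` (with `⋄ = none`): `σ a = some b` iff `ab ∉ I`. -/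
def SigmaSpec (I : TwoSidedIdeal (PathAlg K V A s t)) (σ : A → Option A) : Prop :=
  ∀ a b : A, σ a = some b ↔ arrow K V A s t a * arrow K V A s t b ∉ I

/-- `τ : Q₁ → Q₁ ∪ {⋄}` (with `⋄ = none`): `τ a = some c` iff `ca ∉ I`. -/
def TauSpec (I : TwoSidedIdeal (PathAlg K V A s t)) (τ : A → Option A) : Prop :=
  ∀ a c : A, τ a = some c ↔ arrow K V A s t c * arrow K V A s t a ∉ I

end

/-- Iterate of `σ` (extended to `Q₁ ∪ {⋄}` by `σ(⋄) = ⋄`) applied to an arrow: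
`OIter σ n a = σⁿ(a)`. -/
def OIter {A : Type} (σ : A → Option A) (n : ℕ) (a : A) : Option A :=
  (fun o => o.bind σ)^[n] (some a)

/-- A `(σ,τ)`-maximal path `a₁ ⋯ a_r`: `σ(aᵢ) = a_{i+1}`, `σ(a_r) = ⋄`,
`τ(a₁) = ⋄`. -/
def IsMaximalPath {A : Type} (σ τ : A → Option A) (l : List A) : Prop :=
  l ≠ [] ∧ l.Chain' (fun x y => σ x = some y) ∧
    (∀ x ∈ l.getLast?, σ x = none) ∧ (∀ x ∈ l.head?, τ x = none)

/-- The cycle `C_a = a σ(a) ⋯ σ^{m̂_a−1}(a)`, where `m̂_a` is the least positive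
integer with `σ^{m̂_a}(a) = a`:  `l` has entries the iterates of `σ` at `a` and
length the least positive return time of `a` under `σ`. -/
def IsSigmaCycleOf {A : Type} (σ : A → Option A) (a : A) (l : List A) : Prop :=
  l ≠ [] ∧ (∀ i : ℕ, i < l.length → l[i]? = OIter σ i a) ∧
    OIter σ l.length a = some a ∧
    ∀ k : ℕ, 0 < k → k < l.length → OIter σ k a ≠ some a

/-- A list of arrows is composable (i.e. a genuine path) if the target of each
arrow is the source of the next. -/
def Composable {V A : Type} (s t : A → V) (l : List A) : Prop :=
  l.Chain' (fun a b => t a = s b)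

/-- A simple cycle: a nonempty path with the same start and end vertex and no
repeated arrows. -/
def IsSimpleCycle {V A : Type} (s t : A → V) (l : List A) : Prop :=
  l ≠ [] ∧ Composable s t l ∧ (∀ x ∈ l.head?, ∀ y ∈ l.getLast?, t y = s x) ∧ l.Nodup

/-- The path `C^m` for a cycle `C`. -/
def cyclePow {A : Type} (l : List A) (m : ℕ) : List A := (List.replicate m l).flatten

/-- A defining pair `(𝒮, μ)` in the quiver `Q`: a set `𝒮` of simple cycles and
`μ : 𝒮 → ℤ_{>0}` satisfying (D0)–(D4). -/
def IsDefiningPair {V A : Type} (s t : A → V) (S : Set (List A)) (μ : List A → ℕ) : Prop :=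
  (∀ l ∈ S, IsSimpleCycle s t l) ∧
  (∀ l ∈ S, 0 < μ l) ∧
  (∀ l ∈ S, l.length = 1 → 1 < μ l) ∧
  (∀ l ∈ S, ∀ l' : List A, l.IsRotated l' → l' ∈ S) ∧
  (∀ l ∈ S, ∀ l' ∈ S, l.IsRotated l' → μ l = μ l') ∧
  (∀ a : A, ∃ l ∈ S, a ∈ l) ∧
  (∀ l ∈ S, ∀ l' ∈ S, (∃ a : A, a ∈ l ∧ a ∈ l') → l.IsRotated l')

/-- The set of relations of Types 1, 2 and 3 attached to a defining pair:
Type 1: `C^{μ(C)} − C'^{μ(C')}` for `C, C' ∈ 𝒮` cycles at the same vertex;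
Type 2: `C^{μ(C)} a` for `C ∈ 𝒮` with first arrow `a`;
Type 3: `ab` for arrows `a, b` with `ab` not a subpath of any `C^s`, `C ∈ 𝒮`. -/
def RelSet (K V A : Type) [Field K] [Fintype V] [DecidableEq V] (s t : A → V)
    (S : Set (List A)) (μ : List A → ℕ) : Set (PathAlg K V A s t) :=
  {x | ∃ l ∈ S, ∃ l' ∈ S, ∃ a ∈ l.head?, ∃ a' ∈ l'.head?, s a = s a' ∧
      x = pathElem K V A s t (cyclePow l (μ l)) - pathElem K V A s t (cyclePow l' (μ l'))} ∪
  {x | ∃ l ∈ S, ∃ a ∈ l.head?, x = pathElem K V A s t (cyclePow l (μ l) ++ [a])} ∪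
  {x | ∃ a b : A, x = arrow K V A s t a * arrow K V A s t b ∧
      ∀ l ∈ S, ∀ m : ℕ, ¬ [a, b] <:+: cyclePow l m}

/-- The ideal of relations of a defining pair. -/
def DefIdeal (K V A : Type) [Field K] [Fintype V] [DecidableEq V] (s t : A → V)
    (S : Set (List A)) (μ : List A → ℕ) : TwoSidedIdeal (PathAlg K V A s t) :=
  TwoSidedIdeal.span (RelSet K V A s t S μ)

/-- The relation whose `RingQuot` is the algebra `KQ/I` defined by a defining
pair, `I` generated by the Type 1, 2, 3 relations. -/
def QRel (K V A : Type) [Field K] [Fintype V] [DecidableEq V] (s t : A → V)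
    (S : Set (List A)) (μ : List A → ℕ) :
    PathAlg K V A s t → PathAlg K V A s t → Prop :=
  fun x y => x ∈ RelSet K V A s t S μ ∧ y = 0

/-- The set ℳ of `(σ,τ)`-maximal paths. -/
def MaxPath {A : Type} (σ τ : A → Option A) : Type := {l : List A // IsMaximalPath σ τ l}

/-- The arrows of the quiver `Q*`: the arrows of `Q` together with one new
arrow `a_M` for each `(σ,τ)`-maximal path `M`. -/
def AStar {A : Type} (σ τ : A → Option A) : Type := A ⊕ MaxPath σ τ

/-- Source map of `Q*`: `a_M` starts at `t(M)`. -/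
def sStar {V A : Type} (s t : A → V) (σ τ : A → Option A) : AStar σ τ → V
  | Sum.inl a => s a
  | Sum.inr M => t (M.val.getLast M.prop.1)

/-- Target map of `Q*`: `a_M` ends at `s(M)`. -/
def tStar {V A : Type} (s t : A → V) (σ τ : A → Option A) : AStar σ τ → V
  | Sum.inl a => t a
  | Sum.inr M => s (M.val.head M.prop.1)

/-- `𝒮 = 𝒞 ∪ ℳ*` in `Q*`: the cycles `C_a`, together with all cyclic
permutations of the cycles `M a_M` for `M ∈ ℳ`. -/
def SStar {A : Type} (σ τ : A → Option A) : Set (List (AStar σ τ)) :=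
  {L | ∃ (c : A) (l : List A), IsSigmaCycleOf σ c l ∧ L = l.map Sum.inl} ∪
  {L | ∃ M : MaxPath σ τ, (M.val.map Sum.inl ++ [Sum.inr M]).IsRotated L}

/-! ### Auxiliary lemmas -/

namespace Q17Aux

open List

section OIter

variable {A : Type}

lemma oiter_zero (σ : A → Option A) (a : A) : OIter σ 0 a = some a := rfl

lemma oiter_succ (σ : A → Option A) (n : ℕ) (a : A) :
    OIter σ (n + 1) a = (OIter σ n a).bind σ := by
  unfold OIter
  rw [Function.iterate_succ_apply']

lemma oiter_one (σ : A → Option A) (a : A) : OIter σ 1 a = σ a := by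
  rw [oiter_succ, oiter_zero, Option.bind_some]

lemma oiter_succ' {σ : A → Option A} {a b : A} (h : σ a = some b) (n : ℕ) :
    OIter σ (n + 1) a = OIter σ n b := by
  unfold OIter
  rw [Function.iterate_succ_apply]
  simp [h]

lemma oiter_add {σ : A → Option A} {a c : A} {n : ℕ} (h : OIter σ n a = some c) (m : ℕ) :
    OIter σ (m + n) a = OIter σ m c := by
  unfold OIter at *
  rw [Function.iterate_add_apply, h]

lemma oiter_bind_none (σ : A → Option A) (m : ℕ) :
    (fun o : Option A => o.bind σ)^[m] none = none := by
  induction m with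
  | zero => rfl
  | succ m ih => rw [Function.iterate_succ_apply', ih]; rfl

lemma oiter_some_of_le {σ : A → Option A} {a c : A} {n : ℕ} (h : OIter σ n a = some c)
    {i : ℕ} (hi : i ≤ n) : ∃ d, OIter σ i a = some d := by
  cases hc : OIter σ i a with
  | some d => exact ⟨d, rfl⟩
  | none =>
    exfalso
    obtain ⟨k, rfl⟩ := Nat.exists_eq_add_of_le hi
    unfold OIter at *
    rw [add_comm, Function.iterate_add_apply, hc, oiter_bind_none] at h
    exact absurd h (by simp)

lemma oiter_rev {σ τ : A → Option A} (hinv : ∀ x y : A, σ x = some y ↔ τ y = some x) :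
    ∀ (n : ℕ) {x y : A}, OIter σ n x = some y → OIter τ n y = some x := by
  intro n
  induction n with
  | zero =>
    intro x y h
    rw [oiter_zero] at h
    cases h
    exact oiter_zero τ _
  | succ n ih =>
    intro x y h
    rw [oiter_succ] at h
    cases hz : OIter σ n x with
    | none => rw [hz] at h; exact absurd h (by simp)
    | some z =>
      rw [hz, Option.bind_some] at h
      have h1 : τ y = some z := (hinv z y).1 h
      rw [oiter_succ' h1]
      exact ih hz

lemma oiter_mul {σ : A → Option A} {e : A} {p : ℕ} (h : OIter σ p e = some e) (k : ℕ) :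
    OIter σ (k * p) e = some e := by
  induction k with
  | zero => rw [Nat.zero_mul]; exact oiter_zero σ e
  | succ k ih =>
    have : OIter σ (k * p + p) e = OIter σ (k * p) e := oiter_add h (k * p)
    rw [Nat.succ_mul, this, ih]

lemma return_or_none [Fintype A] {σ τ : A → Option A}
    (hinv : ∀ x y : A, σ x = some y ↔ τ y = some x) (a : A) :
    (∃ k, 0 < k ∧ OIter σ k a = some a) ∨ (∃ n, OIter σ n a = none) := by
  by_cases hnone : ∃ n, OIter σ n a = none
  · exact Or.inr hnone
  left
  push_neg at hnone
  have hsome : ∀ n, ∃ c, OIter σ n a = some c := by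
    intro n
    cases hc : OIter σ n a with
    | none => exact absurd hc (hnone n)
    | some c => exact ⟨c, rfl⟩
  choose g hg using hsome
  obtain ⟨i₀, j₀, hne, hgeq⟩ :=
    Fintype.exists_ne_map_eq_of_card_lt (fun i : Fin (Fintype.card A + 1) => g i)
      (by simp)
  -- wlog i < j
  obtain ⟨i, j, hij, heq⟩ : ∃ i j : ℕ, i < j ∧ g i = g j := by
    rcases lt_or_gt_of_ne hne with h | h
    · exact ⟨i₀, j₀, h, hgeq⟩
    · exact ⟨j₀, i₀, h, hgeq.symm⟩
  have hi : OIter σ i a = some (g i) := hg i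
  have hj : OIter σ j a = some (g i) := by rw [heq]; exact hg j
  set e := g i with he
  set p := j - i with hp
  have hp0 : 0 < p := by omega
  have hpe : OIter σ p e = some e := by
    have := oiter_add hi p
    rw [show p + i = j by omega, hj] at this
    exact this.symm
  -- e is periodic with period p; use τ to come back to a
  have hτi : OIter τ i e = some a := oiter_rev hinv i hi
  have hinv' : ∀ x y : A, τ x = some y ↔ σ y = some x := fun x y => (hinv y x).symm
  set q := (i + 1) * p with hq
  have hqi : i ≤ q := by
    have : i + 1 ≤ (i + 1) * p := Nat.le_mul_of_pos_right _ hp0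
    omega
  have hσq : OIter σ q e = some e := oiter_mul hpe (i + 1)
  have hτq : OIter τ q e = some e := oiter_rev hinv q hσq
  have h1 : OIter τ (q - i) a = some e := by
    have := oiter_add hτi (q - i)
    rw [show q - i + i = q by omega, hτq] at this
    exact this.symm
  have h2 : OIter σ (q - i) e = some a := oiter_rev hinv' (q - i) h1
  have hq0 : 0 < q := Nat.mul_pos (by omega) hp0
  refine ⟨q, hq0, ?_⟩
  have := oiter_add hi (q - i)
  rw [show q - i + i = q by omega, h2] at this
  exact this

end OIter

section Lists

variable {α β : Type}

lemma pair_infix {L : List α} {i : ℕ} {a b : α}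
    (h1 : L[i]? = some a) (h2 : L[i + 1]? = some b) : [a, b] <:+: L := by
  have hi1 : i + 1 < L.length := by
    by_contra h
    rw [List.getElem?_eq_none (by omega)] at h2
    exact absurd h2 (by simp)
  have hi : i < L.length := by omega
  have ha : L[i] = a := by
    rw [List.getElem?_eq_getElem hi] at h1
    exact Option.some.inj h1
  have hb : L[i + 1] = b := by
    rw [List.getElem?_eq_getElem hi1] at h2
    exact Option.some.inj h2
  refine ⟨L.take i, L.drop (i + 2), ?_⟩
  conv_rhs => rw [← List.take_append_drop i L, List.drop_eq_getElem_cons hi,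
    List.drop_eq_getElem_cons hi1]
  simp [ha, hb]

lemma cyclePow_map (g : α → β) (l : List α) (m : ℕ) :
    cyclePow (l.map g) m = (cyclePow l m).map g := by
  unfold cyclePow
  rw [List.map_flatten, List.map_replicate]

lemma cyclePow_length (l : List α) (m : ℕ) :
    (cyclePow l m).length = m * l.length := by
  simp [cyclePow, List.length_flatten, List.map_replicate, List.sum_replicate]

lemma cyclePow_one (l : List α) : cyclePow l 1 = l := by
  simp [cyclePow]

lemma cyclePow_two (l : List α) : cyclePow l 2 = l ++ l := by
  simp [cyclePow]

lemma mem_cyclePow {x : α} {l : List α} (h : x ∈ l) {m : ℕ} (hm : 0 < m) :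
    x ∈ cyclePow l m := by
  unfold cyclePow
  rw [List.mem_flatten]
  exact ⟨l, List.mem_replicate.2 ⟨by omega, rfl⟩, h⟩

/-- The orbit list of `σ` starting at `a`, of length `p`. -/
def orbitList (σ : α → Option α) (a : α) (p : ℕ) : List α :=
  (List.range p).map (fun i => (OIter σ i a).getD a)

lemma orbitList_length (σ : α → Option α) (a : α) (p : ℕ) :
    (orbitList σ a p).length = p := by
  simp [orbitList]

lemma orbitList_getElem? {σ : α → Option α} {a : α} {p : ℕ}
    (hs : ∀ i, i < p → ∃ c, OIter σ i a = some c) {i : ℕ} (hi : i < p) :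
    (orbitList σ a p)[i]? = OIter σ i a := by
  obtain ⟨c, hc⟩ := hs i hi
  rw [orbitList, List.getElem?_map, List.getElem?_range hi, Option.map_some, hc]
  rfl

end Lists

section Key

open List

variable {A : Type}

lemma key_infix [Fintype A] (σ τ : A → Option A)
    (hinv : ∀ x y : A, σ x = some y ↔ τ y = some x) {a b : A} (hab : σ a = some b) :
    ∃ l ∈ SStar σ τ, ∃ m : ℕ, [Sum.inl a, Sum.inl b] <:+: cyclePow l m := by
  classical
  by_cases hret : ∃ k, 0 < k ∧ OIter σ k a = some a
  · -- `a` lies on a σ-cycle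
    set p := Nat.find hret with hpdef
    obtain ⟨hp0, hpa⟩ := Nat.find_spec hret
    rw [← hpdef] at hp0 hpa
    have hsome : ∀ i, i < p → ∃ c, OIter σ i a = some c :=
      fun i hi => oiter_some_of_le hpa (by omega)
    set l := orbitList σ a p with hldef
    have hlen : l.length = p := orbitList_length σ a p
    have hget : ∀ i, i < p → l[i]? = OIter σ i a := fun i hi => orbitList_getElem? hsome hi
    have hcyc : IsSigmaCycleOf σ a l := by
      refine ⟨?_, ?_, ?_, ?_⟩
      · intro h; rw [h] at hlen; simp at hlen; omega
      · intro i hi; exact hget i (by omega)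
      · rw [hlen]; exact hpa
      · intro k hk1 hk2 hk3
        rw [hlen] at hk2
        exact Nat.find_min hret hk2 ⟨hk1, hk3⟩
    refine ⟨l.map Sum.inl, Or.inl ⟨a, l, hcyc, rfl⟩, 2, ?_⟩
    erw [cyclePow_map, cyclePow_two]
    have h0 : (l ++ l)[0]? = some a := by
      rw [List.getElem?_append_left (by omega), hget 0 hp0, oiter_zero]
    have h1 : (l ++ l)[1]? = some b := by
      rcases Nat.lt_or_ge 1 p with hp2 | hp2
      · rw [List.getElem?_append_left (by omega), hget 1 hp2, oiter_one, hab]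
      · -- p = 1, so b = a
        have hp1 : p = 1 := by omega
        have hba : b = a := by
          have := hpa
          rw [hp1, oiter_one, hab] at this
          exact Option.some.inj this
        rw [List.getElem?_append_right (by omega), hlen, hp1]
        rw [hget 0 hp0, oiter_zero, hba]
    exact (pair_infix h0 h1).map Sum.inl
  · -- no return: `a` lies on a maximal path
    have hnone : ∃ n, OIter σ n a = none := (return_or_none hinv a).resolve_left hret
    set n := Nat.find hnone with hndef
    have hn : OIter σ n a = none := Nat.find_spec hnone
    have hnmin : ∀ i, i < n → ∃ c, OIter σ i a = some c := by
      intro i hi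
      cases hc : OIter σ i a with
      | none => exact absurd hc (Nat.find_min hnone hi)
      | some c => exact ⟨c, rfl⟩
    have hn2 : 2 ≤ n := by
      rcases Nat.lt_or_ge n 2 with h | h
      · interval_cases n
        · exact absurd hn (by rw [oiter_zero]; simp)
        · exact absurd hn (by rw [oiter_one, hab]; simp)
      · exact h
    have hinv' : ∀ x y : A, τ x = some y ↔ σ y = some x := fun x y => (hinv y x).symm
    have hτnone : ∃ m, OIter τ m a = none := by
      rcases return_or_none hinv' a with ⟨k, hk, hka⟩ | h
      · exact absurd ⟨k, hk, oiter_rev hinv' k hka⟩ hret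
      · exact h
    set m := Nat.find hτnone with hmdef
    have hm : OIter τ m a = none := Nat.find_spec hτnone
    have hm1 : 1 ≤ m := by
      rcases Nat.eq_zero_or_pos m with h | h
      · exact absurd hm (by rw [h, oiter_zero]; simp)
      · exact h
    have hm' : ∃ c, OIter τ (m - 1) a = some c := by
      cases hc : OIter τ (m - 1) a with
      | none => exact absurd hc (Nat.find_min hτnone (by omega))
      | some c => exact ⟨c, rfl⟩
    obtain ⟨c, hc⟩ := hm'
    have hτc : τ c = none := by
      have h1 : OIter τ (m - 1 + 1) a = (OIter τ (m - 1) a).bind τ := oiter_succ τ (m - 1) a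
      rw [show m - 1 + 1 = m by omega, hc, Option.bind_some, hm] at h1
      exact h1.symm
    have hca : OIter σ (m - 1) c = some a := oiter_rev hinv' (m - 1) hc
    set len := m - 1 + n with hlendef
    have hsome : ∀ i, i < len → ∃ d, OIter σ i c = some d := by
      intro i hi
      rcases Nat.lt_or_ge i (m - 1) with h | h
      · exact oiter_some_of_le hca (by omega)
      · obtain ⟨j, rfl⟩ := Nat.exists_eq_add_of_le h
        obtain ⟨d, hd⟩ := hnmin j (by omega)
        refine ⟨d, ?_⟩
        rw [add_comm, oiter_add hca j, hd]
    set M := orbitList σ c len with hMdef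
    have hlenM : M.length = len := orbitList_length σ c len
    have hgetM : ∀ i, i < len → M[i]? = OIter σ i c := fun i hi => orbitList_getElem? hsome hi
    have hMne : M ≠ [] := by
      intro h; rw [h] at hlenM; simp at hlenM; omega
    have hMmax : IsMaximalPath σ τ M := by
      refine ⟨hMne, ?_, ?_, ?_⟩
      · rw [show List.Chain' _ M ↔ _ from List.isChain_iff_getElem]
        intro i hi
        have hi1 : i + 1 < len := by rw [hlenM] at hi; omega
        have h1 := hgetM i (by omega)
        have h2 := hgetM (i + 1) hi1
        rw [List.getElem?_eq_getElem (by omega)] at h1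
        rw [List.getElem?_eq_getElem (by omega)] at h2
        rw [oiter_succ, ← h1, Option.bind_some] at h2
        exact h2.symm
      · intro x hx
        rw [List.getLast?_eq_getElem?, hlenM] at hx
        have hl1 : len - 1 < len := by omega
        rw [hgetM (len - 1) hl1] at hx
        have hlast : OIter σ len c = none := by
          rw [hlendef, add_comm, oiter_add hca n, hn]
        rw [show len = len - 1 + 1 by omega, oiter_succ, hx, Option.bind_some] at hlast
        exact hlast
      · intro x hx
        rw [List.head?_eq_getElem?, hgetM 0 (by omega), oiter_zero] at hx
        cases hx
        exact hτc
    set Mstar : List (AStar σ τ) := M.map Sum.inl ++ [Sum.inr ⟨M, hMmax⟩] with hMstar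
    refine ⟨Mstar, Or.inr ⟨⟨M, hMmax⟩, List.IsRotated.refl _⟩, 1, ?_⟩
    erw [cyclePow_one]
    have hma : M[m - 1]? = some a := by
      rw [hgetM (m - 1) (by omega), hca]
    have hmb : M[m - 1 + 1]? = some b := by
      rw [hgetM (m - 1 + 1) (by omega), show m - 1 + 1 = 1 + (m - 1) by omega,
        oiter_add hca 1, oiter_one, hab]
    have h1 : [a, b] <:+: M := pair_infix hma hmb
    exact ((h1.map Sum.inl).trans (List.prefix_append _ _).isInfix)

end Key

section PathAlgLemmas

variable (K V A : Type) [Field K] [Fintype V] [DecidableEq V] (s t : A → V)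

lemma vtx_mul_vtx (v w : V) :
    vtx K V A s t v * vtx K V A s t w = if v = w then vtx K V A s t v else 0 := by
  have h := RingQuot.mkAlgHom_rel K
    (PathRel.vtxMul (K := K) (V := V) (A := A) (s := s) (t := t) v w)
  rw [map_mul] at h
  split_ifs with hvw
  · subst hvw
    rw [if_pos rfl] at h
    simpa [vtx] using h
  · rw [if_neg hvw, map_zero] at h
    simpa [vtx] using h

lemma sum_vtx : (∑ v : V, vtx K V A s t v) = 1 := by
  have h := RingQuot.mkAlgHom_rel K
    (PathRel.unit (K := K) (V := V) (A := A) (s := s) (t := t))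
  rw [map_sum, map_one] at h
  simpa [vtx] using h

lemma vtx_mul_arrow (a : A) :
    vtx K V A s t (s a) * arrow K V A s t a = arrow K V A s t a := by
  have h := RingQuot.mkAlgHom_rel K
    (PathRel.src (K := K) (V := V) (A := A) (s := s) (t := t) a)
  rw [map_mul] at h
  simpa [vtx, arrow] using h

lemma arrow_mul_vtx (a : A) :
    arrow K V A s t a * vtx K V A s t (t a) = arrow K V A s t a := by
  have h := RingQuot.mkAlgHom_rel K
    (PathRel.tgt (K := K) (V := V) (A := A) (s := s) (t := t) a)
  rw [map_mul] at h
  simpa [vtx, arrow] using h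

lemma algHom_pathElem {B : Type} [Semiring B] [Algebra K B]
    (g : PathAlg K V A s t →ₐ[K] B) (l : List A) :
    g (pathElem K V A s t l) = (l.map (fun a => g (arrow K V A s t a))).prod := by
  rw [pathElem, map_list_prod, List.map_map]
  rfl

end PathAlgLemmas

end Q17Aux

/-- Every special multiserial algebra `A = KQ/I` is a
quotient of a symmetric special multiserial algebra: the algebra
`A* = KQ*/I*` defined by the defining pair `(𝒮, μ)` associated to `A` admits a
surjective algebra homomorphism `A* → A`, induced by the map fixing the
vertices and arrows of `Q` and sending each new arrow `a_M` to `0`. -/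
theorem quotient_of_symmetric_special_multiserial
    (K V A : Type) [Field K] [Fintype V] [DecidableEq V] [Fintype A]
    (s t : A → V) (I : TwoSidedIdeal (PathAlg K V A s t))
    (hAdm : Admissible K V A s t I) (hM : ConditionM K V A s t I)
    (σ τ : A → Option A) (hσ : SigmaSpec K V A s t I σ) (hτ : TauSpec K V A s t I τ)
    (N : ℕ) (hN2 : 2 ≤ N)
    (hNin : ∀ l : List A, N ≤ l.length → pathElem K V A s t l ∈ I)
    (hNmin : ∀ N' : ℕ, 2 ≤ N' → (∀ l : List A, N' ≤ l.length → pathElem K V A s t l ∈ I) →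
      N ≤ N') :
    ∃ φ : RingQuot (QRel K V (AStar σ τ) (sStar s t σ τ) (tStar s t σ τ) (SStar σ τ)
            (fun _ => N)) →ₐ[K]
          RingQuot (fun x y : PathAlg K V A s t => x - y ∈ I),
      Function.Surjective φ ∧
      (∀ a : A,
        φ (RingQuot.mkAlgHom K
            (QRel K V (AStar σ τ) (sStar s t σ τ) (tStar s t σ τ) (SStar σ τ) (fun _ => N))
            (arrow K V (AStar σ τ) (sStar s t σ τ) (tStar s t σ τ) (Sum.inl a))) =
          RingQuot.mkAlgHom K (fun x y : PathAlg K V A s t => x - y ∈ I)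
            (arrow K V A s t a)) ∧
      (∀ M : MaxPath σ τ,
        φ (RingQuot.mkAlgHom K
            (QRel K V (AStar σ τ) (sStar s t σ τ) (tStar s t σ τ) (SStar σ τ) (fun _ => N))
            (arrow K V (AStar σ τ) (sStar s t σ τ) (tStar s t σ τ) (Sum.inr M))) = 0) ∧
      (∀ v : V,
        φ (RingQuot.mkAlgHom K
            (QRel K V (AStar σ τ) (sStar s t σ τ) (tStar s t σ τ) (SStar σ τ) (fun _ => N))
            (vtx K V (AStar σ τ) (sStar s t σ τ) (tStar s t σ τ) v)) =
          RingQuot.mkAlgHom K (fun x y : PathAlg K V A s t => x - y ∈ I)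
            (vtx K V A s t v)) := by
  classical
  have hinv : ∀ x y : A, σ x = some y ↔ τ y = some x :=
    fun x y => (hσ x y).trans (hτ y x).symm
  let R : PathAlg K V A s t → PathAlg K V A s t → Prop := fun x y => x - y ∈ I
  let mkB : PathAlg K V A s t →ₐ[K] RingQuot R := RingQuot.mkAlgHom K R
  have hmkI : ∀ z : PathAlg K V A s t, z ∈ I → mkB z = 0 := by
    intro z hz
    have h : R z 0 := by show z - 0 ∈ I; rwa [sub_zero]
    have h2 := RingQuot.mkAlgHom_rel K h
    rwa [map_zero] at h2
  let gens : V ⊕ AStar σ τ → RingQuot R :=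
    Sum.elim (fun v => mkB (vtx K V A s t v))
      (Sum.elim (fun a => mkB (arrow K V A s t a)) (fun _ => 0))
  let f0 : FreeAlgebra K (V ⊕ AStar σ τ) →ₐ[K] RingQuot R := FreeAlgebra.lift K gens
  have hf0v : ∀ v : V, f0 (ι K (Sum.inl v)) = mkB (vtx K V A s t v) := fun v =>
    FreeAlgebra.lift_ι_apply _ _
  have hf0a : ∀ a : A, f0 (ι K (Sum.inr (Sum.inl a))) = mkB (arrow K V A s t a) := fun a =>
    FreeAlgebra.lift_ι_apply _ _
  have hf0M : ∀ M : MaxPath σ τ, f0 (ι K (Sum.inr (Sum.inr M))) = 0 := fun M =>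
    FreeAlgebra.lift_ι_apply _ _
  have h1 : ∀ ⦃x y⦄,
      PathRel K V (AStar σ τ) (sStar s t σ τ) (tStar s t σ τ) x y → f0 x = f0 y := by
    intro x y h
    cases h with
    | vtxMul v w =>
      split_ifs with hvw
      · subst hvw
        rw [map_mul, hf0v, ← map_mul, Q17Aux.vtx_mul_vtx, if_pos rfl]
      · rw [map_mul, hf0v, hf0v, ← map_mul, Q17Aux.vtx_mul_vtx, if_neg hvw, map_zero, map_zero]
    | unit =>
      rw [map_sum, map_one]
      simp only [hf0v]
      rw [← map_sum, Q17Aux.sum_vtx, map_one]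
    | src x =>
      cases x with
      | inl a =>
        rw [map_mul, hf0a, hf0v,
          show sStar s t σ τ (Sum.inl a) = s a from rfl, ← map_mul, Q17Aux.vtx_mul_arrow]
      | inr M =>
        rw [map_mul, hf0M, mul_zero]
    | tgt x =>
      cases x with
      | inl a =>
        rw [map_mul, hf0a, hf0v,
          show tStar s t σ τ (Sum.inl a) = t a from rfl, ← map_mul, Q17Aux.arrow_mul_vtx]
      | inr M =>
        rw [map_mul, hf0M, zero_mul]
  let f1 : PathAlg K V (AStar σ τ) (sStar s t σ τ) (tStar s t σ τ) →ₐ[K] RingQuot R :=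
    RingQuot.liftAlgHom K ⟨f0, h1⟩
  have hf1mk : ∀ z, f1 (RingQuot.mkAlgHom K
      (PathRel K V (AStar σ τ) (sStar s t σ τ) (tStar s t σ τ)) z) = f0 z := fun z =>
    RingQuot.liftAlgHom_mkAlgHom_apply _ _ _ _
  have hf1a : ∀ a : A,
      f1 (arrow K V (AStar σ τ) (sStar s t σ τ) (tStar s t σ τ) (Sum.inl a)) =
        mkB (arrow K V A s t a) := by
    intro a
    erw [arrow, hf1mk]
    exact hf0a a
  have hf1M : ∀ M : MaxPath σ τ,
      f1 (arrow K V (AStar σ τ) (sStar s t σ τ) (tStar s t σ τ) (Sum.inr M)) = 0 := by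
    intro M
    erw [arrow, hf1mk]
    exact hf0M M
  have hf1v : ∀ v : V,
      f1 (vtx K V (AStar σ τ) (sStar s t σ τ) (tStar s t σ τ) v) = mkB (vtx K V A s t v) := by
    intro v
    rw [vtx, hf1mk]
    exact hf0v v
  have hpath0 : ∀ L : List (AStar σ τ), (∃ M : MaxPath σ τ, Sum.inr M ∈ L) →
      f1 (pathElem K V (AStar σ τ) (sStar s t σ τ) (tStar s t σ τ) L) = 0 := by
    rintro L ⟨M, hM⟩
    rw [Q17Aux.algHom_pathElem]
    exact List.prod_eq_zero (List.mem_map.2 ⟨Sum.inr M, hM, hf1M M⟩)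
  have hpathinl : ∀ lA : List A,
      f1 (pathElem K V (AStar σ τ) (sStar s t σ τ) (tStar s t σ τ) (lA.map Sum.inl)) =
        mkB (pathElem K V A s t lA) := by
    intro lA
    erw [Q17Aux.algHom_pathElem, Q17Aux.algHom_pathElem, List.map_map]
    exact congrArg List.prod (List.map_congr_left (fun a _ => hf1a a))
  have hSdec : ∀ l ∈ SStar σ τ, (∃ c lA, IsSigmaCycleOf σ c lA ∧ l = lA.map Sum.inl) ∨
      (∃ M : MaxPath σ τ, Sum.inr M ∈ l) := by
    rintro l (⟨c, lA, hc, rfl⟩ | ⟨M, hrot⟩)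
    · exact Or.inl ⟨c, lA, hc, rfl⟩
    · exact Or.inr ⟨M, hrot.mem_iff.1 (List.mem_append_right _ (List.mem_singleton_self _))⟩
  have hcycN : ∀ l ∈ SStar σ τ,
      f1 (pathElem K V (AStar σ τ) (sStar s t σ τ) (tStar s t σ τ) (cyclePow l N)) = 0 := by
    intro l hl
    rcases hSdec l hl with ⟨c, lA, hc, rfl⟩ | ⟨M, hM⟩
    · erw [Q17Aux.cyclePow_map, hpathinl]
      apply hmkI
      apply hNin
      rw [Q17Aux.cyclePow_length]
      have hpos : 0 < lA.length := List.length_pos_iff.2 hc.1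
      exact Nat.le_mul_of_pos_right N hpos
    · exact hpath0 _ ⟨M, Q17Aux.mem_cyclePow hM (by omega)⟩
  have hQrel : ∀ ⦃x y⦄,
      QRel K V (AStar σ τ) (sStar s t σ τ) (tStar s t σ τ) (SStar σ τ) (fun _ => N) x y →
        f1 x = f1 y := by
    rintro x y ⟨hx, rfl⟩
    rw [map_zero]
    rcases hx with (h | h) | h
    · obtain ⟨l, hl, l', hl', a, _, a', _, _, rfl⟩ := h
      rw [map_sub, hcycN l hl, hcycN l' hl']
      exact sub_zero (0 : RingQuot R)
    · obtain ⟨l, hl, a, ha, rfl⟩ := h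
      rcases hSdec l hl with ⟨c, lA, hc, rfl⟩ | ⟨M, hM⟩
      · erw [List.head?_map] at ha
        obtain ⟨a0, _, rfl⟩ := Option.map_eq_some_iff.1 ha
        erw [Q17Aux.cyclePow_map,
          show (cyclePow lA N).map Sum.inl ++ [Sum.inl a0] =
            (cyclePow lA N ++ [a0]).map Sum.inl by simp,
          hpathinl]
        apply hmkI
        apply hNin
        rw [List.length_append, Q17Aux.cyclePow_length]
        have hpos : 0 < lA.length := List.length_pos_iff.2 hc.1
        exact le_trans (Nat.le_mul_of_pos_right N hpos) (Nat.le_add_right _ _)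
      · exact hpath0 _ ⟨M, List.mem_append_left _ (Q17Aux.mem_cyclePow hM (show 0 < N by omega))⟩
    · obtain ⟨a, b, rfl, hnin⟩ := h
      cases a with
      | inr M => rw [map_mul, hf1M, zero_mul]
      | inl a0 =>
        cases b with
        | inr M => rw [map_mul, hf1M, mul_zero]
        | inl b0 =>
          rw [map_mul, hf1a, hf1a, ← map_mul]
          apply hmkI
          by_contra hni
          have hab : σ a0 = some b0 := (hσ a0 b0).2 hni
          obtain ⟨l, hl, m, hinf⟩ := Q17Aux.key_infix σ τ hinv hab
          exact hnin l hl m hinf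
  refine ⟨RingQuot.liftAlgHom K ⟨f1, hQrel⟩, ?_, ?_, ?_, ?_⟩
  · -- surjectivity
    intro y
    obtain ⟨z, rfl⟩ := RingQuot.mkAlgHom_surjective K
      (fun x y : PathAlg K V A s t => x - y ∈ I) y
    obtain ⟨w, rfl⟩ := RingQuot.mkAlgHom_surjective K (PathRel K V A s t) z
    induction w using FreeAlgebra.induction with
    | grade0 r => exact ⟨algebraMap K _ r, by simp [AlgHom.commutes]⟩
    | grade1 x =>
      cases x with
      | inl v =>
        refine ⟨RingQuot.mkAlgHom K
          (QRel K V (AStar σ τ) (sStar s t σ τ) (tStar s t σ τ) (SStar σ τ) (fun _ => N))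
          (vtx K V (AStar σ τ) (sStar s t σ τ) (tStar s t σ τ) v), ?_⟩
        rw [RingQuot.liftAlgHom_mkAlgHom_apply]
        exact hf1v v
      | inr a =>
        refine ⟨RingQuot.mkAlgHom K
          (QRel K V (AStar σ τ) (sStar s t σ τ) (tStar s t σ τ) (SStar σ τ) (fun _ => N))
          (arrow K V (AStar σ τ) (sStar s t σ τ) (tStar s t σ τ) (Sum.inl a)), ?_⟩
        rw [RingQuot.liftAlgHom_mkAlgHom_apply]
        exact hf1a a
    | mul p q hp hq =>
      obtain ⟨p', hp'⟩ := hp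
      obtain ⟨q', hq'⟩ := hq
      exact ⟨p' * q', by rw [map_mul, hp', hq', ← map_mul, ← map_mul]⟩
    | add p q hp hq =>
      obtain ⟨p', hp'⟩ := hp
      obtain ⟨q', hq'⟩ := hq
      exact ⟨p' + q', by rw [map_add, hp', hq', ← map_add, ← map_add]⟩
  · intro a
    rw [RingQuot.liftAlgHom_mkAlgHom_apply]
    exact hf1a a
  · intro M
    rw [RingQuot.liftAlgHom_mkAlgHom_apply]
    exact hf1M M
  · intro v
    rw [RingQuot.liftAlgHom_mkAlgHom_apply]
    exact hf1v v
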